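/- Let $G$ be a group and let $a_1,\dots,a_k$ ($k \ge 2$) be elements of $G$ satisfying the braid relations, and set $b_i = a_{i+1} a_i a_{i+1}^{-1}$. Then the sequence $(a_1, a_2, \dots, a_{k-1}, a_k, a_1, a_2, \dots, a_{k-1})$ of length $2k-1$ is Hurwitz equivalent to the sequence $(b_1, b_2, \dots, b_{k-1}, a_k, a_k, \dots, a_k)$, where $a_k$ is repeated $k$ times. -/

import Mathlib

/-- One elementary (Hurwitz) transformation of sequences in a group. -/
def HurwitzStep {G : Type*} [Group G] (s t : List G) : Prop :=
  ∃ (l₁ l₂ : List G) (x y : G),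
    (s = l₁ ++ x :: y :: l₂ ∧ t = l₁ ++ (x * y * x⁻¹) :: x :: l₂) ∨
    (s = l₁ ++ x :: y :: l₂ ∧ t = l₁ ++ y :: (y⁻¹ * x * y) :: l₂)

/-- Hurwitz equivalence: finitely many elementary transformations. -/
def HurwitzEquiv {G : Type*} [Group G] : List G → List G → Prop :=
  Relation.ReflTransGen HurwitzStep

/-- The sequence `a m, a (m+1), …, a k` (ascending indices). -/
def seqAsc {G : Type*} (a : ℕ → G) (m k : ℕ) : List G :=
  (List.range (k + 1 - m)).map fun i => a (m + i)

namespace HurwitzAux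

variable {G : Type*} [Group G]

lemma step_append (l r : List G) {s t : List G} (h : HurwitzStep s t) :
    HurwitzStep (l ++ s ++ r) (l ++ t ++ r) := by
  obtain ⟨l₁, l₂, x, y, h | h⟩ := h
  · exact ⟨l ++ l₁, l₂ ++ r, x, y, Or.inl ⟨by simp [h.1], by simp [h.2]⟩⟩
  · exact ⟨l ++ l₁, l₂ ++ r, x, y, Or.inr ⟨by simp [h.1], by simp [h.2]⟩⟩

lemma equiv_append (l r : List G) {s t : List G} (h : HurwitzEquiv s t) :
    HurwitzEquiv (l ++ s ++ r) (l ++ t ++ r) :=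
  Relation.ReflTransGen.lift (fun s => l ++ s ++ r) (fun _ _ h => step_append l r h) _ _ h

lemma equiv_trans {s t u : List G} (h1 : HurwitzEquiv s t) (h2 : HurwitzEquiv t u) :
    HurwitzEquiv s u := Relation.ReflTransGen.trans h1 h2

lemma equiv_refl (s : List G) : HurwitzEquiv s s := Relation.ReflTransGen.refl

lemma equiv_of_step {s t : List G} (h : HurwitzStep s t) : HurwitzEquiv s t :=
  Relation.ReflTransGen.single h

lemma swapL (l r : List G) (x y : G) :
    HurwitzEquiv (l ++ x :: y :: r) (l ++ (x * y * x⁻¹) :: x :: r) :=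
  equiv_of_step ⟨l, r, x, y, Or.inl ⟨rfl, rfl⟩⟩

lemma swapR (l r : List G) (x y : G) :
    HurwitzEquiv (l ++ x :: y :: r) (l ++ y :: (y⁻¹ * x * y) :: r) :=
  equiv_of_step ⟨l, r, x, y, Or.inr ⟨rfl, rfl⟩⟩

lemma push_right (c : G) : ∀ (l : List G), (∀ z ∈ l, c * z = z * c) →
    HurwitzEquiv (c :: l) (l ++ [c])
  | [], _ => equiv_refl _
  | z :: l, h => by
    have h1 : HurwitzEquiv (c :: z :: l) (z :: c :: l) := by
      have hc : z⁻¹ * c * z = c := by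
        rw [mul_assoc, h z (by simp), inv_mul_cancel_left]
      have := swapR ([] : List G) l c z
      simpa [hc] using this
    refine equiv_trans h1 ?_
    have := equiv_append [z] [] (push_right c l (fun w hw => h w (by simp [hw])))
    simpa using this

lemma absorb (x b y : G) (h : b⁻¹ * x * b = y) :
    ∀ m n, HurwitzEquiv (List.replicate m x ++ b :: List.replicate n y)
      (b :: List.replicate (m + n) y)
  | 0, n => by simpa using equiv_refl _
  | m + 1, n => by
    have step : HurwitzEquiv
        (List.replicate m x ++ x :: b :: List.replicate n y)
        (List.replicate m x ++ b :: y :: List.replicate n y) := by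
      have := swapR (List.replicate m x) (List.replicate n y) x b
      rwa [h] at this
    have e1 : List.replicate (m + 1) x ++ b :: List.replicate n y
        = List.replicate m x ++ x :: b :: List.replicate n y := by
      simp [List.replicate_succ']
    have e2 : List.replicate m x ++ b :: y :: List.replicate n y
        = List.replicate m x ++ b :: List.replicate (n + 1) y := by
      simp [List.replicate_succ]
    rw [e1]
    refine equiv_trans step ?_
    rw [e2]
    have e3 : m + 1 + n = m + (n + 1) := by omega
    rw [e3]
    exact absorb x b y h m (n + 1)

lemma conj_id {x y : G} (h : x * y * x = y * x * y) :
    (y * x * y⁻¹)⁻¹ * x * (y * x * y⁻¹) = y := by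
  have h2 : x * (y * x * y⁻¹) = (y * x * y⁻¹) * y := by
    have e1 : x * (y * x * y⁻¹) = (x * y * x) * y⁻¹ := by group
    rw [e1, h]; group
  calc (y * x * y⁻¹)⁻¹ * x * (y * x * y⁻¹)
      = (y * x * y⁻¹)⁻¹ * ((y * x * y⁻¹) * y) := by rw [mul_assoc, h2]
    _ = y := by group

lemma seqAsc_succ (a : ℕ → G) (m : ℕ) :
    seqAsc a 1 (m + 1) = seqAsc a 1 m ++ [a (m + 1)] := by
  simp [seqAsc, List.range_succ, Nat.add_comm 1 m]

lemma mem_seqAsc {a : ℕ → G} {m : ℕ} {z : G} (hz : z ∈ seqAsc a 1 m) :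
    ∃ j, 1 ≤ j ∧ j ≤ m ∧ z = a j := by
  simp only [seqAsc, List.mem_map, List.mem_range] at hz
  obtain ⟨i, hi, rfl⟩ := hz
  exact ⟨1 + i, by omega, by omega, rfl⟩

end HurwitzAux

namespace HurwitzAux

variable {G : Type*} [Group G]

lemma main : ∀ (n : ℕ) (a : ℕ → G),
    (∀ i, 1 ≤ i → i + 1 ≤ n + 2 →
      a i * a (i + 1) * a i = a (i + 1) * a i * a (i + 1)) →
    (∀ i j, 1 ≤ i → j ≤ n + 2 → i + 2 ≤ j → a i * a j = a j * a i) →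
    HurwitzEquiv (seqAsc a 1 (n + 2) ++ seqAsc a 1 (n + 1))
      (seqAsc (fun i => a (i + 1) * a i * (a (i + 1))⁻¹) 1 (n + 1) ++
        List.replicate (n + 2) (a (n + 2)))
  | 0, a, hb, _ => by
    have h := hb 1 le_rfl (by omega)
    have key : (a 2 * a 1 * (a 2)⁻¹)⁻¹ * a 1 * (a 2 * a 1 * (a 2)⁻¹) = a 2 :=
      conj_id h
    have s1 : HurwitzEquiv [a 1, a 2, a 1] [a 1, a 2 * a 1 * (a 2)⁻¹, a 2] := by
      simpa using swapL [a 1] ([] : List G) (a 2) (a 1)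
    have s2 : HurwitzEquiv [a 1, a 2 * a 1 * (a 2)⁻¹, a 2]
        [a 2 * a 1 * (a 2)⁻¹, a 2, a 2] := by
      have := swapR ([] : List G) [a 2] (a 1) (a 2 * a 1 * (a 2)⁻¹)
      simpa only [key, List.nil_append] using this
    have e1 : seqAsc a 1 2 ++ seqAsc a 1 1 = [a 1, a 2, a 1] := by
      simp [seqAsc, List.range_succ]
    have e2 : seqAsc (fun i => a (i + 1) * a i * (a (i + 1))⁻¹) 1 1 ++
        List.replicate 2 (a 2) = [a 2 * a 1 * (a 2)⁻¹, a 2, a 2] := by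
      simp [seqAsc, List.range_succ, List.replicate]
    rw [e1, e2]
    exact equiv_trans s1 s2
  | n + 1, a, hb, hc => by
    have e3 : seqAsc a 1 (n + 3) = seqAsc a 1 (n + 2) ++ [a (n + 3)] :=
      seqAsc_succ a (n + 2)
    have e2 : seqAsc a 1 (n + 2) = seqAsc a 1 (n + 1) ++ [a (n + 2)] :=
      seqAsc_succ a (n + 1)
    have key : (a (n + 3) * a (n + 2) * (a (n + 3))⁻¹)⁻¹ * a (n + 2) *
        (a (n + 3) * a (n + 2) * (a (n + 3))⁻¹) = a (n + 3) := by
      have h : a (n + 2) * a (n + 3) * a (n + 2)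
          = a (n + 3) * a (n + 2) * a (n + 3) := hb (n + 2) (by omega) (by omega)
      exact conj_id h
    have hAcomm : ∀ z ∈ seqAsc a 1 (n + 1), a (n + 3) * z = z * a (n + 3) := by
      intro z hz
      obtain ⟨j, hj1, hj2, rfl⟩ := mem_seqAsc hz
      exact (hc j (n + 3) hj1 (by omega) (by omega)).symm
    have stepA : HurwitzEquiv
        (seqAsc a 1 (n + 2) ++ (a (n + 3) :: seqAsc a 1 (n + 1)) ++ [a (n + 2)])
        (seqAsc a 1 (n + 2) ++ (seqAsc a 1 (n + 1) ++ [a (n + 3)]) ++ [a (n + 2)]) :=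
      equiv_append (seqAsc a 1 (n + 2)) [a (n + 2)]
        (push_right (a (n + 3)) (seqAsc a 1 (n + 1)) hAcomm)
    have stepB : HurwitzEquiv
        ((seqAsc a 1 (n + 2) ++ seqAsc a 1 (n + 1)) ++ a (n + 3) :: a (n + 2) :: [])
        ((seqAsc a 1 (n + 2) ++ seqAsc a 1 (n + 1)) ++
          (a (n + 3) * a (n + 2) * (a (n + 3))⁻¹) :: a (n + 3) :: []) :=
      swapL (seqAsc a 1 (n + 2) ++ seqAsc a 1 (n + 1)) [] (a (n + 3)) (a (n + 2))
    have ih := main n a (fun i h1 h2 => hb i h1 (by omega))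
      (fun i j h1 h2 h3 => hc i j h1 (by omega) h3)
    have stepC : HurwitzEquiv
        ((seqAsc a 1 (n + 2) ++ seqAsc a 1 (n + 1)) ++
          [a (n + 3) * a (n + 2) * (a (n + 3))⁻¹, a (n + 3)])
        ((seqAsc (fun i => a (i + 1) * a i * (a (i + 1))⁻¹) 1 (n + 1) ++
            List.replicate (n + 2) (a (n + 2))) ++
          [a (n + 3) * a (n + 2) * (a (n + 3))⁻¹, a (n + 3)]) := by
      have := equiv_append []
        [a (n + 3) * a (n + 2) * (a (n + 3))⁻¹, a (n + 3)] ih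
      simpa using this
    have stepD : HurwitzEquiv
        (seqAsc (fun i => a (i + 1) * a i * (a (i + 1))⁻¹) 1 (n + 1) ++
          (List.replicate (n + 2) (a (n + 2)) ++
            (a (n + 3) * a (n + 2) * (a (n + 3))⁻¹) :: List.replicate 1 (a (n + 3))))
        (seqAsc (fun i => a (i + 1) * a i * (a (i + 1))⁻¹) 1 (n + 1) ++
          ((a (n + 3) * a (n + 2) * (a (n + 3))⁻¹) ::
            List.replicate (n + 3) (a (n + 3)))) := by
      have h := absorb (a (n + 2)) (a (n + 3) * a (n + 2) * (a (n + 3))⁻¹)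
        (a (n + 3)) key (n + 2) 1
      have := equiv_append
        (seqAsc (fun i => a (i + 1) * a i * (a (i + 1))⁻¹) 1 (n + 1)) [] h
      simpa using this
    have eL : seqAsc a 1 (n + 3) ++ seqAsc a 1 (n + 2)
        = seqAsc a 1 (n + 2) ++ (a (n + 3) :: seqAsc a 1 (n + 1)) ++ [a (n + 2)] := by
      conv_lhs => rw [e3, e2]
      conv_rhs => rw [e2]
      simp
    have eM1 : seqAsc a 1 (n + 2) ++ (seqAsc a 1 (n + 1) ++ [a (n + 3)]) ++ [a (n + 2)]
        = (seqAsc a 1 (n + 2) ++ seqAsc a 1 (n + 1)) ++ a (n + 3) :: a (n + 2) :: [] := by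
      simp
    have eM3 : (seqAsc (fun i => a (i + 1) * a i * (a (i + 1))⁻¹) 1 (n + 1) ++
            List.replicate (n + 2) (a (n + 2))) ++
          [a (n + 3) * a (n + 2) * (a (n + 3))⁻¹, a (n + 3)]
        = seqAsc (fun i => a (i + 1) * a i * (a (i + 1))⁻¹) 1 (n + 1) ++
          (List.replicate (n + 2) (a (n + 2)) ++
            (a (n + 3) * a (n + 2) * (a (n + 3))⁻¹) :: List.replicate 1 (a (n + 3))) := by
      simp
    have eR : seqAsc (fun i => a (i + 1) * a i * (a (i + 1))⁻¹) 1 (n + 1) ++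
          ((a (n + 3) * a (n + 2) * (a (n + 3))⁻¹) :: List.replicate (n + 3) (a (n + 3)))
        = seqAsc (fun i => a (i + 1) * a i * (a (i + 1))⁻¹) 1 (n + 2) ++
          List.replicate (n + 3) (a (n + 3)) := by
      conv_rhs => rw [seqAsc_succ (fun i => a (i + 1) * a i * (a (i + 1))⁻¹) (n + 1)]
      simp
    show HurwitzEquiv (seqAsc a 1 (n + 3) ++ seqAsc a 1 (n + 2))
      (seqAsc (fun i => a (i + 1) * a i * (a (i + 1))⁻¹) 1 (n + 2) ++
        List.replicate (n + 3) (a (n + 3)))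
    rw [eL]
    refine equiv_trans stepA ?_
    rw [eM1]
    refine equiv_trans stepB ?_
    refine equiv_trans stepC ?_
    rw [eM3]
    refine equiv_trans stepD ?_
    rw [eR]
    exact equiv_refl _

end HurwitzAux

/-- if `a 1, …, a k` (`k ≥ 2`) satisfy the braid relations and
`b i = a (i+1) * a i * (a (i+1))⁻¹`, then
`(a 1, …, a k, a 1, …, a (k-1)) ∼ (b 1, …, b (k-1), a k, …, a k)`
with `a k` repeated `k` times. -/
theorem statement4 {G : Type*} [Group G] (k : ℕ) (hk : 2 ≤ k) (a : ℕ → G)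
    (hbraid : ∀ i, 1 ≤ i → i + 1 ≤ k →
      a i * a (i + 1) * a i = a (i + 1) * a i * a (i + 1))
    (hcomm : ∀ i j, 1 ≤ i → j ≤ k → i + 2 ≤ j → a i * a j = a j * a i) :
    HurwitzEquiv (seqAsc a 1 k ++ seqAsc a 1 (k - 1))
      (seqAsc (fun i => a (i + 1) * a i * (a (i + 1))⁻¹) 1 (k - 1) ++
        List.replicate k (a k)) := by
  obtain ⟨n, rfl⟩ : ∃ n, k = n + 2 := ⟨k - 2, by omega⟩
  exact HurwitzAux.main n a hbraid hcomm
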